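/- Let S be a closed set with normal cone map N_S having closed graph, and suppose φ : [0,T] → ℝᵐ × ℝⁿ is an absolutely continuous solution of the differential inclusion (ζ̇, ξ̇) ∈ (g(ζ,ξ), f(ζ,ξ) − P⁻¹N_S(ξ) ∩ δ𝔹) with ξ(t) ∈ S for a.e. t, where δ ≥ √(λ_max(P)/λ_min(P))·sup‖f‖ along the trajectory. If additionally S is convex and the P-projection characterization Π_S^P(ξ, f) = f − P⁻¹η with η the unique minimizer of ‖f − P⁻¹η‖²_P over η ∈ N_S(ξ) holds, then φ is a solution of ξ̇ = Π^P_S(ξ, f(ζ,ξ)) if and only if it solves the normal-cone inclusion. -/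

import Mathlib

open Metric Set MeasureTheory Filter
open scoped RealInnerProductSpace Topology

section Aux

lemma my_small_s (A B : ℝ) (hB : 0 ≤ B)
    (h : ∀ s : ℝ, 0 < s → s ≤ 1 → 0 ≤ s * s * B + 2 * (s * A)) : 0 ≤ A := by
  by_contra h'
  push_neg at h'
  set s : ℝ := min 1 (-A / (B + 1)) with hs
  have hApos : 0 < -A := by linarith
  have hB1 : (0:ℝ) < B + 1 := by linarith
  have hspos : 0 < s := lt_min one_pos (div_pos hApos hB1)
  have hs1 : s ≤ 1 := min_le_left _ _
  have hs2 : s ≤ -A / (B + 1) := min_le_right _ _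
  have h3 := h s hspos hs1
  have h4 : s * B ≤ (-A / (B + 1)) * B := mul_le_mul_of_nonneg_right hs2 hB
  have h5 : (-A / (B + 1)) * B < -A := by
    rw [div_mul_eq_mul_div, div_lt_iff₀ hB1]
    nlinarith
  nlinarith

variable {E : Type*} [NormedAddCommGroup E]

section NS
variable [NormedSpace ℝ E]

lemma my_tc_iff {S : Set E} {x y : E} : y ∈ tangentConeAt ℝ S x ↔
    ∃ (c : ℕ → ℝ) (d : ℕ → E), (∀ᶠ n in atTop, x + d n ∈ S) ∧
      Tendsto (fun n => ‖c n‖) atTop atTop ∧ Tendsto (fun n => c n • d n) atTop (𝓝 y) := by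
  rw [mem_tangentConeAt_iff_exists_seq_norm_tendsto_atTop]
  constructor
  · rintro ⟨c, d, h1, h2, h3⟩; exact ⟨c, d, h2, h1, h3⟩
  · rintro ⟨c, d, h1, h2, h3⟩; exact ⟨c, d, h2, h1, h3⟩

lemma my_zero_mem_tc {S : Set E} {x : E} (hx : x ∈ S) : (0 : E) ∈ tangentConeAt ℝ S x := by
  refine my_tc_iff.2 ⟨fun k => (k : ℝ), fun _ => 0, ?_, ?_, ?_⟩
  · filter_upwards with k; simpa using hx
  · have : (fun k : ℕ => ‖(k : ℝ)‖) = fun k : ℕ => (k : ℝ) := funext fun k => by simp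
    rw [this]; exact tendsto_natCast_atTop_atTop
  · simpa using tendsto_const_nhds

lemma my_neg_mem_tc {S : Set E} {x w : E} (hw : w ∈ tangentConeAt ℝ S x) :
    -w ∈ tangentConeAt ℝ S x := by
  obtain ⟨c, d, h1, h2, h3⟩ := my_tc_iff.1 hw
  refine my_tc_iff.2 ⟨fun k => -(c k), d, h1, by simpa using h2, ?_⟩
  have : (fun k => (-(c k)) • d k) = fun k => -((c k) • d k) := funext fun k => by
    simp [neg_smul]
  rw [this]
  simpa using h3.neg

lemma my_deriv_mem_tc {S : Set E} (hS : Convex ℝ S) {ξ : ℝ → E} {T t : ℝ}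
    (ht : t ∈ Ioo 0 T) (hξS : ∀ u ∈ Icc (0:ℝ) T, ξ u ∈ S)
    (hcont : ContinuousAt ξ t) {μ : E} (hder : HasDerivAt ξ μ t)
    {z : E} (hz : z ∈ S) {s : ℝ} (hs0 : 0 ≤ s) (hs1 : s ≤ 1)
    (ε : ℝ) (hε : ε = 1 ∨ ε = -1) :
    ε • μ + s • (z - ξ t) ∈ tangentConeAt ℝ S (ξ t) := by
  have hεabs : |ε| = 1 := by rcases hε with h | h <;> simp [h]
  have hεne : ε ≠ 0 := by rcases hε with h | h <;> simp [h]
  have hev : ∀ᶠ k : ℕ in atTop, 1 ≤ k ∧ t + ε / k ∈ Icc (0:ℝ) T := by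
    have hδpos : 0 < min t (T - t) := lt_min ht.1 (by linarith [ht.2])
    obtain ⟨N, hN⟩ := exists_nat_gt (1 / min t (T - t))
    filter_upwards [eventually_ge_atTop (max N 1)] with k hk
    have hk1 : 1 ≤ k := le_trans (le_max_right _ _) hk
    have hkN : (N : ℝ) ≤ k := Nat.cast_le.mpr (le_trans (le_max_left _ _) hk)
    have hkpos : (0:ℝ) < k := by exact_mod_cast Nat.lt_of_lt_of_le Nat.zero_lt_one hk1
    have habs : |ε / k| ≤ min t (T - t) := by
      rw [abs_div, hεabs, abs_of_pos hkpos]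
      rw [div_le_iff₀ hkpos]
      have h1 : 1 / min t (T - t) < (k : ℝ) := lt_of_lt_of_le hN hkN
      rw [div_lt_iff₀ hδpos] at h1
      linarith
    have h1 := abs_le.mp habs
    refine ⟨hk1, ?_, ?_⟩
    · have := h1.1; have := min_le_left t (T - t); linarith
    · have := h1.2; have := min_le_right t (T - t); linarith
  refine my_tc_iff.2 ⟨fun k => (k : ℝ),
    fun k => (ξ (t + ε / k) - ξ t) + (s / k) • (z - ξ (t + ε / k)), ?_, ?_, ?_⟩
  · filter_upwards [hev] with k ⟨hk1, hkI⟩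
    have hkpos : (0:ℝ) < k := by exact_mod_cast Nat.lt_of_lt_of_le Nat.zero_lt_one hk1
    have hk1' : (1:ℝ) ≤ k := by exact_mod_cast hk1
    have hsk0 : 0 ≤ s / k := div_nonneg hs0 hkpos.le
    have hsk1 : s / k ≤ 1 := by
      rw [div_le_one hkpos]; linarith
    have hmem : (1 - s / k) • ξ (t + ε / k) + (s / k) • z ∈ S :=
      hS (hξS _ hkI) hz (by linarith) hsk0 (by ring)
    have heq : ξ t + ((ξ (t + ε / k) - ξ t) + (s / k) • (z - ξ (t + ε / k)))
        = (1 - s / k) • ξ (t + ε / k) + (s / k) • z := by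
      module
    rw [heq]; exact hmem
  · have : (fun k : ℕ => ‖(k : ℝ)‖) = fun k : ℕ => (k : ℝ) := funext fun k => by simp
    rw [this]; exact tendsto_natCast_atTop_atTop
  · have hts0 : Tendsto (fun k : ℕ => t + ε / k) atTop (𝓝 t) := by
      have : Tendsto (fun k : ℕ => ε / k) atTop (𝓝 0) :=
        tendsto_const_nhds.div_atTop tendsto_natCast_atTop_atTop
      simpa using tendsto_const_nhds.add this
    have hts : Tendsto (fun k : ℕ => t + ε / k) atTop (𝓝[≠] t) := by
      rw [tendsto_nhdsWithin_iff]
      refine ⟨hts0, ?_⟩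
      filter_upwards [eventually_ge_atTop 1] with k hk
      have hkpos : (0:ℝ) < k := by exact_mod_cast Nat.lt_of_lt_of_le Nat.zero_lt_one hk
      simp only [mem_compl_iff, mem_singleton_iff]
      intro h
      have : ε / k = 0 := by linarith
      exact hεne (by field_simp at this; simpa using this)
    have hslope := (hasDerivAt_iff_tendsto_slope.mp hder).comp hts
    have hterm1 : Tendsto (fun k : ℕ => (k : ℝ) • (ξ (t + ε / k) - ξ t)) atTop (𝓝 (ε • μ)) := by
      have := hslope.const_smul ε
      refine this.congr' ?_
      filter_upwards [eventually_ge_atTop 1] with k hk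
      have hkpos : (0:ℝ) < k := by exact_mod_cast Nat.lt_of_lt_of_le Nat.zero_lt_one hk
      show ε • slope ξ t (t + ε / k) = (k : ℝ) • (ξ (t + ε / k) - ξ t)
      rw [slope_def_module]
      simp only [add_sub_cancel_left]
      rw [smul_smul]
      congr 1
      rcases hε with h | h <;> (subst h; field_simp)
    have hterm2 : Tendsto (fun k : ℕ => (k : ℝ) • ((s / k) • (z - ξ (t + ε / k)))) atTop
        (𝓝 (s • (z - ξ t))) := by
      have hu : Tendsto (fun k : ℕ => ξ (t + ε / k)) atTop (𝓝 (ξ t)) :=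
        hcont.tendsto.comp hts0
      have : Tendsto (fun k : ℕ => s • (z - ξ (t + ε / k))) atTop (𝓝 (s • (z - ξ t))) :=
        (tendsto_const_nhds.sub hu).const_smul s
      refine this.congr' ?_
      filter_upwards [eventually_ge_atTop 1] with k hk
      have hkpos : (0:ℝ) < k := by exact_mod_cast Nat.lt_of_lt_of_le Nat.zero_lt_one hk
      rw [smul_smul]
      congr 1
      field_simp
    have := hterm1.add hterm2
    refine this.congr ?_
    intro k
    rw [smul_add]

end NS

variable [InnerProductSpace ℝ E]

lemma my_expand (P : E →L[ℝ] E) (hPsym : ∀ a b : E, ⟪P a, b⟫ = ⟪a, P b⟫) (F v w : E) :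
    ⟪v + w - F, P (v + w - F)⟫ =
      ⟪v - F, P (v - F)⟫ + 2 * ⟪w, P (v - F)⟫ + ⟪w, P w⟫ := by
  have hsym : ⟪v - F, P w⟫ = ⟪w, P (v - F)⟫ := by
    rw [← hPsym, real_inner_comm]
  have h1 : v + w - F = (v - F) + w := by abel
  rw [h1, map_add, inner_add_left, inner_add_right, inner_add_right, hsym]
  ring

end Aux

/-- equivalence of solutions of the projected dynamical system
and of the truncated-normal-cone differential inclusion, for convex `S`. -/
theorem stmt15 {m n : ℕ}
    (S : Set (EuclideanSpace ℝ (Fin n))) (hScl : IsClosed S) (hSconv : Convex ℝ S)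
    (g : EuclideanSpace ℝ (Fin m) → EuclideanSpace ℝ (Fin n) → EuclideanSpace ℝ (Fin m))
    (f : EuclideanSpace ℝ (Fin m) → EuclideanSpace ℝ (Fin n) → EuclideanSpace ℝ (Fin n))
    (P Q : EuclideanSpace ℝ (Fin n) →L[ℝ] EuclideanSpace ℝ (Fin n))
    (lmin lmax : ℝ) (hlmin : 0 < lmin) (hlmax : lmin ≤ lmax)
    (hPsym : ∀ a b : EuclideanSpace ℝ (Fin n), ⟪P a, b⟫ = ⟪a, P b⟫)
    (hPlow : ∀ w : EuclideanSpace ℝ (Fin n), lmin * ‖w‖ ^ 2 ≤ ⟪w, P w⟫)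
    (hPhigh : ∀ w : EuclideanSpace ℝ (Fin n), ⟪w, P w⟫ ≤ lmax * ‖w‖ ^ 2)
    (hPQ : ∀ w, P (Q w) = w) (hQP : ∀ w, Q (P w) = w)
    (T : ℝ) (hT : 0 < T)
    (ζ : ℝ → EuclideanSpace ℝ (Fin m)) (ξ : ℝ → EuclideanSpace ℝ (Fin n))
    (hζc : ContinuousOn ζ (Icc 0 T)) (hξc : ContinuousOn ξ (Icc 0 T))
    (hξS : ∀ t ∈ Icc (0 : ℝ) T, ξ t ∈ S)
    (δ : ℝ)
    (hδ : ∀ t ∈ Icc (0 : ℝ) T, Real.sqrt (lmax / lmin) * ‖f (ζ t) (ξ t)‖ ≤ δ) :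
    ((∀ᵐ t ∂(volume.restrict (Icc (0 : ℝ) T)),
        HasDerivAt ζ (g (ζ t) (ξ t)) t ∧
        ∃ μ ∈ tangentConeAt ℝ S (ξ t),
          (∀ μ' ∈ tangentConeAt ℝ S (ξ t),
            ⟪μ - f (ζ t) (ξ t), P (μ - f (ζ t) (ξ t))⟫ ≤
              ⟪μ' - f (ζ t) (ξ t), P (μ' - f (ζ t) (ξ t))⟫) ∧
          HasDerivAt ξ μ t) ↔
      (∀ᵐ t ∂(volume.restrict (Icc (0 : ℝ) T)),
        HasDerivAt ζ (g (ζ t) (ξ t)) t ∧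
        ∃ η : EuclideanSpace ℝ (Fin n),
          (∀ w ∈ tangentConeAt ℝ S (ξ t), ⟪η, w⟫ ≤ 0) ∧ ‖Q η‖ ≤ δ ∧
          HasDerivAt ξ (f (ζ t) (ξ t) - Q η) t)) := by
  have hae : ∀ᵐ t ∂(volume.restrict (Icc (0 : ℝ) T)), t ∈ Ioo (0:ℝ) T := by
    have h1 : ∀ᵐ t ∂(volume.restrict (Icc (0 : ℝ) T)), t ∈ Icc (0:ℝ) T :=
      ae_restrict_mem measurableSet_Icc
    have h2 : (volume.restrict (Icc (0 : ℝ) T)) ({0, T} : Set ℝ) = 0 := by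
      apply le_antisymm _ zero_le
      calc (volume.restrict (Icc (0 : ℝ) T)) ({0, T} : Set ℝ)
          ≤ volume ({0, T} : Set ℝ) := Measure.restrict_apply_le _ _
        _ = 0 := (Set.toFinite _).measure_zero volume
    have h3 : ∀ᵐ t ∂(volume.restrict (Icc (0 : ℝ) T)), t ∉ ({0, T} : Set ℝ) := by
      rw [ae_iff]
      simpa only [not_not, Set.setOf_mem_eq] using h2
    filter_upwards [h1, h3] with t h4 h5
    simp only [mem_insert_iff, mem_singleton_iff, not_or] at h5
    exact ⟨h4.1.lt_of_ne (Ne.symm h5.1), h4.2.lt_of_ne h5.2⟩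
  constructor
  · intro h
    filter_upwards [h, hae] with t ht htI
    obtain ⟨hζd, μ, hμK, hmin, hμd⟩ := ht
    have hxS : ξ t ∈ S := hξS t (Ioo_subset_Icc_self htI)
    have hcont : ContinuousAt ξ t := hξc.continuousAt (Icc_mem_nhds htI.1 htI.2)
    set F := f (ζ t) (ξ t) with hF
    have orth : ∀ z ∈ S, ⟪P (F - μ), z - ξ t⟫ = 0 := by
      intro z hz
      set v := z - ξ t with hv
      set A : ℝ := ⟪v, P (μ - F)⟫ with hA
      set B : ℝ := ⟪v, P v⟫ with hB
      have hBnn : 0 ≤ B := le_trans (mul_nonneg hlmin.le (by positivity)) (hPlow v)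
      have hplus : ∀ s : ℝ, 0 < s → s ≤ 1 → 0 ≤ s * s * B + 2 * (s * A) := by
        intro s hs hs1
        have hm : μ + s • v ∈ tangentConeAt ℝ S (ξ t) := by
          have := my_deriv_mem_tc hSconv htI hξS hcont hμd hz hs.le hs1 1 (Or.inl rfl)
          simpa [hv] using this
        have h2 := hmin _ hm
        rw [my_expand P hPsym F μ (s • v)] at h2
        have e1 : ⟪s • v, P (μ - F)⟫ = s * A := real_inner_smul_left _ _ _
        have e2 : ⟪s • v, P (s • v)⟫ = s * s * B := by
          rw [_root_.map_smul, real_inner_smul_left, real_inner_smul_right, hB]; ring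
        rw [e1, e2] at h2
        linarith
      have hminus : ∀ s : ℝ, 0 < s → s ≤ 1 → 0 ≤ s * s * B + 2 * (s * (-A)) := by
        intro s hs hs1
        have hm0 := my_neg_mem_tc
          (my_deriv_mem_tc hSconv htI hξS hcont hμd hz hs.le hs1 (-1) (Or.inr rfl))
        have heq : -((-1 : ℝ) • μ + s • (z - ξ t)) = μ + (-s) • v := by
          rw [hv]; module
        rw [heq] at hm0
        have h2 := hmin _ hm0
        rw [my_expand P hPsym F μ ((-s) • v)] at h2
        have e1 : ⟪(-s) • v, P (μ - F)⟫ = (-s) * A := real_inner_smul_left _ _ _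
        have e2 : ⟪(-s) • v, P ((-s) • v)⟫ = s * s * B := by
          rw [_root_.map_smul, real_inner_smul_left, real_inner_smul_right, hB]; ring
        rw [e1, e2] at h2
        linarith
      have hA1 : 0 ≤ A := my_small_s A B hBnn hplus
      have hA2 : 0 ≤ -A := my_small_s (-A) B hBnn hminus
      have hA0 : A = 0 := le_antisymm (by linarith) hA1
      have hfin : ⟪P (F - μ), v⟫ = -A := by
        rw [hPsym]
        have h5 : F - μ = -(μ - F) := by abel
        rw [h5, inner_neg_left, hA, ← hPsym, real_inner_comm]
      rw [hfin, hA0, neg_zero]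
    refine ⟨hζd, P (F - μ), ?_, ?_, ?_⟩
    · intro w hw
      obtain ⟨c, d, h1, h2, h3⟩ := my_tc_iff.1 hw
      have hlim : Tendsto (fun k => ⟪P (F - μ), c k • d k⟫) atTop (𝓝 ⟪P (F - μ), w⟫) :=
        Tendsto.inner tendsto_const_nhds h3
      have hzero : ∀ᶠ k in atTop, ⟪P (F - μ), c k • d k⟫ = (0:ℝ) := by
        filter_upwards [h1] with k hk
        rw [real_inner_smul_right]
        have hd : d k = (ξ t + d k) - ξ t := by abel
        rw [hd, orth _ hk, mul_zero]
      have h0 : Tendsto (fun k => ⟪P (F - μ), c k • d k⟫) atTop (𝓝 (0:ℝ)) :=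
        Tendsto.congr' (EventuallyEq.symm hzero) tendsto_const_nhds
      have := tendsto_nhds_unique hlim h0
      rw [this]
    · rw [hQP]
      have h0 := hmin 0 (my_zero_mem_tc hxS)
      have e0 : ⟪(0:EuclideanSpace ℝ (Fin n)) - F, P ((0:EuclideanSpace ℝ (Fin n)) - F)⟫
          = ⟪F, P F⟫ := by
        rw [zero_sub, _root_.map_neg, inner_neg_neg]
      rw [e0] at h0
      have hlow := hPlow (μ - F)
      have hhigh := hPhigh F
      have hkey : lmin * ‖μ - F‖ ^ 2 ≤ lmax * ‖F‖ ^ 2 := by linarith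
      have hnn : ‖F - μ‖ = ‖μ - F‖ := norm_sub_rev _ _
      have hsq : Real.sqrt (lmax / lmin) ^ 2 = lmax / lmin :=
        Real.sq_sqrt (div_nonneg (by linarith) hlmin.le)
      have hle : ‖F - μ‖ ≤ Real.sqrt (lmax / lmin) * ‖F‖ := by
        rw [hnn]
        have h6 : ‖μ - F‖ ^ 2 ≤ (Real.sqrt (lmax / lmin) * ‖F‖) ^ 2 := by
          rw [mul_pow, hsq, div_mul_eq_mul_div, le_div_iff₀ hlmin]
          nlinarith
        nlinarith [norm_nonneg (μ - F), Real.sqrt_nonneg (lmax / lmin), norm_nonneg F,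
          mul_nonneg (Real.sqrt_nonneg (lmax / lmin)) (norm_nonneg F)]
      exact le_trans hle (hδ t (Ioo_subset_Icc_self htI))
    · have hQη : F - Q (P (F - μ)) = μ := by rw [hQP]; abel
      rw [hQη]
      exact hμd
  · intro h
    filter_upwards [h, hae] with t ht htI
    obtain ⟨hζd, η, hpol, hQδ, hηd⟩ := ht
    have hxS : ξ t ∈ S := hξS t (Ioo_subset_Icc_self htI)
    have hcont : ContinuousAt ξ t := hξc.continuousAt (Icc_mem_nhds htI.1 htI.2)
    set F := f (ζ t) (ξ t) with hF
    set μ := F - Q η with hμ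
    have hμd : HasDerivAt ξ μ t := hηd
    have hμK : μ ∈ tangentConeAt ℝ S (ξ t) := by
      have := my_deriv_mem_tc hSconv htI hξS hcont hμd hxS le_rfl zero_le_one 1 (Or.inl rfl)
      simpa using this
    have hnegμ : -μ ∈ tangentConeAt ℝ S (ξ t) := by
      have := my_deriv_mem_tc hSconv htI hξS hcont hμd hxS le_rfl zero_le_one (-1) (Or.inr rfl)
      simpa using this
    refine ⟨hζd, μ, hμK, ?_, hμd⟩
    intro μ' hμ'
    have h1 : 0 ≤ ⟪η, μ⟫ := by
      have := hpol _ hnegμ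
      rw [inner_neg_right] at this
      linarith
    have h2 : ⟪η, μ'⟫ ≤ 0 := hpol _ hμ'
    have h3 := my_expand P hPsym F μ (μ' - μ)
    rw [show μ + (μ' - μ) = μ' from by abel] at h3
    have hPμF : P (μ - F) = -η := by
      have h4 : μ - F = -(Q η) := by rw [hμ]; abel
      rw [h4, _root_.map_neg, hPQ]
    have e1 : ⟪μ' - μ, P (μ - F)⟫ = ⟪η, μ⟫ - ⟪η, μ'⟫ := by
      rw [hPμF, inner_neg_right, inner_sub_left,
        real_inner_comm μ' η, real_inner_comm μ η]
      ring
    have e2 : 0 ≤ ⟪μ' - μ, P (μ' - μ)⟫ :=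
      le_trans (mul_nonneg hlmin.le (by positivity)) (hPlow _)
    rw [h3, e1]
    linarith
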